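/- arXiv:1910.00494 — 3 statements merged into one kernel-verified Lean document; each statement's English description precedes it below -/
import Mathlib

section
/- Sampling a shortest path p_{uw} with probability 1/(n(n-1)σ_{uw}), the expected value of f_v(p_{uw}) equals the percolation centrality p(v), i.e. E[f_v] = p(v) for every vertex v. -/
open Finset

/-- Sampling a shortest path `p ∈ S u w` with probability `1/(n(n-1)σ_{uw})`, the
expectation of `f_v` equals the percolation centrality `p(v)`. Here `Int p` is the
set of internal vertices of the path `p`. -/
theorem expectation_eq_percolation_centrality {V P : Type*} [Fintype V] [DecidableEq V]
    (S : V → V → Finset P) (x : V → ℝ) (Int : P → Finset V) (v : V)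
    (hx : ∀ u, x u ∈ Set.Icc (0 : ℝ) 1)
    (hdiag : ∀ u, S u u = ∅)
    (hne : ∀ u w : V, u ≠ w → (S u w).Nonempty)
    (hint : ∀ u w : V, ∀ p ∈ S u w, v ∈ Int p → u ≠ v ∧ w ≠ v) :
    ∑ u : V, ∑ w : V, ∑ p ∈ S u w,
      ((1 : ℝ) / ((Fintype.card V : ℝ) * ((Fintype.card V : ℝ) - 1) * ((S u w).card : ℝ))) *
        ((max (x u - x w) 0 /
            (∑ f ∈ univ.filter (fun f => f ≠ v), ∑ d ∈ univ.filter (fun d => d ≠ v),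
              max (x f - x d) 0)) *
          (if v ∈ Int p then 1 else 0))
    = (1 : ℝ) / ((Fintype.card V : ℝ) * ((Fintype.card V : ℝ) - 1)) *
        ∑ u ∈ univ.filter (fun u => u ≠ v), ∑ w ∈ univ.filter (fun w => w ≠ v),
          (((S u w).filter (fun p => v ∈ Int p)).card : ℝ) / ((S u w).card : ℝ) *
            (max (x u - x w) 0 /
              (∑ f ∈ univ.filter (fun f => f ≠ v), ∑ d ∈ univ.filter (fun d => d ≠ v),
                max (x f - x d) 0)) := by
  classical
  set n : ℝ := (Fintype.card V : ℝ) with hn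
  set D : ℝ := ∑ f ∈ univ.filter (fun f => f ≠ v), ∑ d ∈ univ.filter (fun d => d ≠ v),
      max (x f - x d) 0 with hD
  set g : V → V → ℝ := fun u w =>
    (((S u w).filter (fun p => v ∈ Int p)).card : ℝ) / ((S u w).card : ℝ) *
      (max (x u - x w) 0 / D) with hg
  have hfilter : ∀ u w : V, (u = v ∨ w = v) →
      (S u w).filter (fun p => v ∈ Int p) = ∅ := by
    intro u w h
    rw [Finset.filter_eq_empty_iff]
    intro p hp hv
    rcases hint u w p hp hv with ⟨h1, h2⟩
    rcases h with h | h
    · exact h1 h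
    · exact h2 h
  have key : ∀ u w : V, (∑ p ∈ S u w,
      ((1 : ℝ) / (n * (n - 1) * ((S u w).card : ℝ))) *
        ((max (x u - x w) 0 / D) * (if v ∈ Int p then 1 else 0)))
      = 1 / (n * (n - 1)) * g u w := by
    intro u w
    rw [← Finset.mul_sum, ← Finset.mul_sum, Finset.sum_boole, hg]
    simp only [div_eq_mul_inv, mul_inv]
    ring
  have step1 : (∑ u : V, ∑ w : V, ∑ p ∈ S u w,
      ((1 : ℝ) / (n * (n - 1) * ((S u w).card : ℝ))) *
        ((max (x u - x w) 0 / D) * (if v ∈ Int p then 1 else 0)))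
      = 1 / (n * (n - 1)) * ∑ u : V, ∑ w : V, g u w := by
    rw [Finset.mul_sum]
    refine Finset.sum_congr rfl fun u _ => ?_
    rw [Finset.mul_sum]
    exact Finset.sum_congr rfl fun w _ => key u w
  rw [step1]
  congr 1
  have hzero : ∀ u w : V, u = v ∨ w = v → g u w = 0 := by
    intro u w h
    rw [hg]
    simp [hfilter u w h]
  have inner : ∀ u : V, (∑ w ∈ univ.filter (fun w => w ≠ v), g u w) = ∑ w : V, g u w := by
    intro u
    apply Finset.sum_filter_of_ne
    intro w _ hw
    intro hwv
    exact hw (hzero u w (Or.inr hwv))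
  have outer : (∑ u ∈ univ.filter (fun u => u ≠ v), ∑ w : V, g u w)
      = ∑ u : V, ∑ w : V, g u w := by
    apply Finset.sum_filter_of_ne
    intro u _ hu
    intro huv
    apply hu
    apply Finset.sum_eq_zero
    intro w _
    exact hzero u w (Or.inl huv)
  calc ∑ u : V, ∑ w : V, g u w
      = ∑ u ∈ univ.filter (fun u => u ≠ v), ∑ w : V, g u w := outer.symm
    _ = ∑ u ∈ univ.filter (fun u => u ≠ v), ∑ w ∈ univ.filter (fun w => w ≠ v), g u w := by
        exact Finset.sum_congr rfl fun u _ => (inner u).symm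
end

section
/- Suppose each point of a finite set B ⊆ D belongs to at most M of the ranges in a family R of subsets of D, with M ≥ 1. If B is shattered by R, then |B| ≤ ⌊log₂ M⌋ + 1. -/
/-- Counting argument: if every point of a finite set `B` lies in at most `M ≥ 1`
ranges of a family `R`, and `B` is shattered by `R`, then `|B| ≤ ⌊log₂ M⌋ + 1`. -/
theorem shattered_card_le_log {D : Type*} (R : Set (Set D)) (B : Finset D)
    (M : ℕ) (hM : 1 ≤ M)
    (hfin : ∀ b ∈ B, {r ∈ R | b ∈ r}.Finite)
    (hcount : ∀ b ∈ B, {r ∈ R | b ∈ r}.ncard ≤ M)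
    (hshat : ∀ s ⊆ (B : Set D), ∃ r ∈ R, (B : Set D) ∩ r = s) :
    B.card ≤ Nat.log 2 M + 1 := by
  classical
  rcases B.eq_empty_or_nonempty with rfl | ⟨b, hb⟩
  · simp
  -- choice of a range realizing each subset
  have hchoice : ∀ s ∈ (B.erase b).powerset, ∃ r, r ∈ R ∧ (B : Set D) ∩ r = ↑(insert b s) := by
    intro s hs
    apply hshat
    intro x hx
    simp only [Finset.coe_insert, Set.mem_insert_iff] at hx
    rcases hx with rfl | hx
    · exact hb
    · exact Finset.mem_of_mem_erase (Finset.mem_powerset.mp hs hx)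
  choose! f hfR hfeq using hchoice
  set S := {r ∈ R | b ∈ r} with hS
  have hSfin : S.Finite := hfin b hb
  have hmap : ∀ s ∈ (B.erase b).powerset, f s ∈ hSfin.toFinset := by
    intro s hs
    rw [Set.Finite.mem_toFinset]
    refine ⟨hfR s hs, ?_⟩
    have : b ∈ (B : Set D) ∩ f s := by
      rw [hfeq s hs]; simp
    exact this.2
  have hinj : ∀ s ∈ (B.erase b).powerset, ∀ t ∈ (B.erase b).powerset,
      f s = f t → s = t := by
    intro s hs t ht hft
    have h1 : (↑(insert b s) : Set D) = ↑(insert b t) := by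
      rw [← hfeq s hs, ← hfeq t ht, hft]
    have h2 : insert b s = insert b t := by
      exact_mod_cast h1
    have hbs : b ∉ s := fun h => (Finset.mem_erase.mp (Finset.mem_powerset.mp hs h)).1 rfl
    have hbt : b ∉ t := fun h => (Finset.mem_erase.mp (Finset.mem_powerset.mp ht h)).1 rfl
    have := congrArg (Finset.erase · b) h2
    simpa [Finset.erase_insert hbs, Finset.erase_insert hbt] using this
  have hcard : (B.erase b).powerset.card ≤ hSfin.toFinset.card :=
    Finset.card_le_card_of_injOn f hmap hinj
  rw [Finset.card_powerset, Finset.card_erase_of_mem hb] at hcard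
  have hcM : hSfin.toFinset.card ≤ M := by
    rw [← Set.ncard_eq_toFinset_card S hSfin]
    exact hcount b hb
  have hpow : 2 ^ (B.card - 1) ≤ M := le_trans hcard hcM
  have hlog : B.card - 1 ≤ Nat.log 2 M :=
    (Nat.le_log_iff_pow_le one_lt_two (by omega)).mpr hpow
  omega
end

section
/- Let G be a graph with vertex-diameter D = diam(G) ≥ 3 (maximum number of vertices on a shortest path). Then the pseudo-dimension of the range space (U, F) of percolation functions f_v over shortest paths satisfies PD ≤ ⌊lg(D − 2)⌋ + 1. -/
open Finset

/-- Pseudo-dimension bound for the percolation range space: if the vertex-diameter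
is `D ≥ 3` (so every shortest path has at most `D − 2` internal vertices), then any
set `B ⊆ U × [0,1]` shattered by the ranges `R_{f_v} = {(p,t) : t ≤ f_v(p)}` of the
percolation functions `f_v` has size at most `⌊log₂ (D−2)⌋ + 1`. -/
theorem percolation_pseudodimension_bound {V P : Type*} [Fintype V] [DecidableEq V]
    (x : V → ℝ) (src tgt : P → V) (Int : P → Finset V)
    (hx : ∀ v, x v ∈ Set.Icc (0 : ℝ) 1)
    (hint : ∀ p : P, ∀ v ∈ Int p, src p ≠ v ∧ tgt p ≠ v)
    (hden : ∀ v : V, 0 < ∑ a ∈ univ.filter (fun a => a ≠ v),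
      ∑ d ∈ univ.filter (fun d => d ≠ v), max (x a - x d) 0)
    (D : ℕ) (hD : 3 ≤ D)
    (hpath : ∀ p : P, (Int p).card ≤ D - 2)
    (B : Finset (P × ℝ))
    (hB : ∀ b ∈ B, b.2 ∈ Set.Icc (0 : ℝ) 1)
    (hshat : ∀ s ⊆ (B : Set (P × ℝ)), ∃ v : V,
      (B : Set (P × ℝ)) ∩ {q : P × ℝ | q.2 ≤
        (max (x (src q.1) - x (tgt q.1)) 0 /
          (∑ a ∈ univ.filter (fun a => a ≠ v),
            ∑ d ∈ univ.filter (fun d => d ≠ v), max (x a - x d) 0)) *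
        (if v ∈ Int q.1 then 1 else 0)} = s) :
    B.card ≤ Nat.log 2 (D - 2) + 1 := by
  classical
  rcases B.eq_empty_or_nonempty with hB0 | hBne
  · simp [hB0]
  obtain ⟨b, hb⟩ := hBne
  set R : V → Set (P × ℝ) := fun v => {q : P × ℝ | q.2 ≤
        (max (x (src q.1) - x (tgt q.1)) 0 /
          (∑ a ∈ univ.filter (fun a => a ≠ v),
            ∑ d ∈ univ.filter (fun d => d ≠ v), max (x a - x d) 0)) *
        (if v ∈ Int q.1 then 1 else 0)} with hR
  have hRnn : ∀ (v : V) (q : P × ℝ),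
      0 ≤ (max (x (src q.1) - x (tgt q.1)) 0 /
          (∑ a ∈ univ.filter (fun a => a ≠ v),
            ∑ d ∈ univ.filter (fun d => d ≠ v), max (x a - x d) 0)) *
        (if v ∈ Int q.1 then 1 else 0) := by
    intro v q
    apply mul_nonneg (div_nonneg (le_max_right _ _) (hden v).le)
    split_ifs <;> norm_num
  have hpos : ∀ q ∈ B, (0:ℝ) < q.2 := by
    intro q hq
    by_contra h
    push_neg at h
    obtain ⟨v0, hv0⟩ := hshat ∅ (Set.empty_subset _)
    have hmem : q ∈ (B : Set (P × ℝ)) ∩ R v0 :=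
      ⟨hq, le_trans h (hRnn v0 q)⟩
    rw [hv0] at hmem
    exact hmem
  have key : ∀ T ∈ (B.erase b).powerset, ∃ v ∈ Int b.1,
      (B : Set (P × ℝ)) ∩ R v = ↑(insert b T) := by
    intro T hT
    rw [mem_powerset] at hT
    have hsub : (↑(insert b T) : Set (P × ℝ)) ⊆ (B : Set (P × ℝ)) := by
      intro q hq
      simp only [coe_insert, Set.mem_insert_iff, mem_coe] at hq ⊢
      rcases hq with rfl | hq
      · exact hb
      · exact B.erase_subset b (hT hq)
    obtain ⟨v, hv⟩ := hshat _ hsub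
    refine ⟨v, ?_, hv⟩
    have hbmem : b ∈ (B : Set (P × ℝ)) ∩ R v := by
      rw [hv]; simp
    have hle := hbmem.2
    simp only [hR, Set.mem_setOf_eq] at hle
    by_contra hvnot
    rw [if_neg hvnot, mul_zero] at hle
    exact absurd hle (not_le.mpr (hpos b hb))
  have hNe : Nonempty V := by
    obtain ⟨v0, _⟩ := hshat ∅ (Set.empty_subset _); exact ⟨v0⟩
  have g : ∀ T : Finset (P × ℝ), T ∈ (B.erase b).powerset → V := by
    intro T hT
    exact (key T hT).choose
  -- turn into a total function
  let gt : Finset (P × ℝ) → V := fun T =>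
    if h : T ∈ (B.erase b).powerset then (key T h).choose else Classical.arbitrary V
  have hg1 : ∀ T ∈ (B.erase b).powerset, gt T ∈ Int b.1 := by
    intro T hT
    simp only [gt, dif_pos hT]
    exact (key T hT).choose_spec.1
  have hg2 : ∀ T ∈ (B.erase b).powerset,
      (B : Set (P × ℝ)) ∩ R (gt T) = ↑(insert b T) := by
    intro T hT
    simp only [gt, dif_pos hT]
    exact (key T hT).choose_spec.2
  have hinj : Set.InjOn gt ((B.erase b).powerset : Set (Finset (P × ℝ))) := by
    intro T hT T' hT' heq
    rw [mem_coe] at hT hT'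
    have h1 := hg2 T hT
    have h2 := hg2 T' hT'
    rw [heq] at h1
    have : (↑(insert b T) : Set (P × ℝ)) = ↑(insert b T') := by
      rw [← h1, ← h2]
    have h3 : insert b T = insert b T' := Finset.coe_injective this
    have hbT : b ∉ T := fun h => (B.notMem_erase b) ((mem_powerset.mp hT) h)
    have hbT' : b ∉ T' := fun h => (B.notMem_erase b) ((mem_powerset.mp hT') h)
    calc T = (insert b T).erase b := (erase_insert hbT).symm
      _ = (insert b T').erase b := by rw [h3]
      _ = T' := erase_insert hbT'
  have hcard : (B.erase b).powerset.card ≤ (Int b.1).card :=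
    Finset.card_le_card_of_injOn gt hg1 hinj
  rw [card_powerset, card_erase_of_mem hb] at hcard
  have hle : 2 ^ (B.card - 1) ≤ D - 2 := hcard.trans (hpath b.1)
  have hD2 : D - 2 ≠ 0 := by omega
  have := (Nat.le_log_iff_pow_le one_lt_two hD2).mpr hle
  have hb1 : 1 ≤ B.card := Finset.card_pos.mpr ⟨b, hb⟩
  omega
end
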